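/- Large-distance expansion of the surface area: lim_{ρ→+∞} [ A(ρ) − 4π(ρ² − k̃ r_s ρ) ] = π r_s² k̃ (k̃ − 2). -/

import Mathlib

open Real Filter Topology

private lemma hasDerivAt_one_sub_rpow (q t : ℝ) (h : (1:ℝ) - t ≠ 0) :
    HasDerivAt (fun s : ℝ => (1 - s) ^ q) (-(q * (1 - t) ^ (q - 1))) t := by
  have h1 : HasDerivAt (fun s : ℝ => 1 - s) (-1) t := (hasDerivAt_id t).const_sub 1
  have h2 := (Real.hasDerivAt_rpow_const (x := 1 - t) (p := q) (Or.inl h)).comp t h1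
  refine h2.congr_deriv ?_
  ring

private lemma tendsto_one_sub_rpow (q : ℝ) :
    Tendsto (fun t : ℝ => (1 - t) ^ q) (𝓝[>] (0:ℝ)) (𝓝 1) := by
  have h : ContinuousAt (fun t : ℝ => (1 - t) ^ q) 0 := by
    apply ContinuousAt.rpow_const (by fun_prop)
    left; norm_num
  have h2 : Tendsto (fun t : ℝ => (1 - t) ^ q) (𝓝[>] (0:ℝ)) (𝓝 (((1:ℝ) - 0) ^ q)) :=
    h.tendsto.mono_left nhdsWithin_le_nhds
  simpa using h2

private lemma tendstoD1 (q : ℝ) :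
    Tendsto (fun t : ℝ => ((1 - t) ^ q - 1) / t) (𝓝[>] (0:ℝ)) (𝓝 (-q)) := by
  have h := hasDerivAt_one_sub_rpow q 0 (by norm_num)
  rw [hasDerivAt_iff_tendsto_slope] at h
  have h2 : Tendsto (slope (fun s : ℝ => (1 - s) ^ q) 0) (𝓝[>] (0:ℝ))
      (𝓝 (-(q * ((1:ℝ) - 0) ^ (q-1)))) :=
    h.mono_left (nhdsWithin_mono 0 (fun x hx => Set.mem_compl_singleton_iff.mpr (ne_of_gt hx)))
  have h3 : -(q * ((1:ℝ) - 0) ^ (q-1)) = -q := by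
    simp
  rw [h3] at h2
  refine h2.congr (fun x => ?_)
  simp [slope_def_field]

private lemma tendstoD2 (q : ℝ) :
    Tendsto (fun t : ℝ => ((1 - t) ^ q - 1 + q * t) / t ^ 2) (𝓝[>] (0:ℝ))
      (𝓝 (q * (q - 1) / 2)) := by
  have hT : Tendsto (fun t : ℝ => t) (𝓝[>] (0:ℝ)) (𝓝 0) := tendsto_id.mono_left nhdsWithin_le_nhds
  apply HasDerivAt.lhopital_zero_nhdsGT
    (f' := fun t : ℝ => -(q * (1 - t) ^ (q - 1)) + q) (g' := fun t : ℝ => 2 * t)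
  · filter_upwards [Ioo_mem_nhdsGT one_pos] with t ht
    have h1 : (1:ℝ) - t ≠ 0 := by have := ht.2; intro h; have h2 := ht.2; linarith
    have := ((hasDerivAt_one_sub_rpow q t h1).sub_const 1).add ((hasDerivAt_id t).const_mul q)
    refine this.congr_deriv ?_
    ring
  · filter_upwards with t
    have := hasDerivAt_pow 2 t
    refine this.congr_deriv ?_ <;> (push_cast; ring)
  · filter_upwards [self_mem_nhdsWithin] with t ht
    have : (0:ℝ) < t := ht
    positivity
  · have h0 := ((tendsto_one_sub_rpow q).sub_const 1).add (hT.const_mul q)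
    simpa using h0
  · simpa using hT.pow 2
  · have h1 := (tendstoD1 (q-1)).const_mul (-q/2)
    have h2 : -q/2 * -(q-1) = q * (q-1) / 2 := by ring
    rw [h2] at h1
    refine h1.congr' ?_
    filter_upwards [self_mem_nhdsWithin] with t ht
    have ht' : (t:ℝ) ≠ 0 := ne_of_gt ht
    field_simp
    ring

private lemma tendstoD3 (q : ℝ) :
    Tendsto (fun t : ℝ => ((1 - t) ^ q - 1 + q * t - q * (q-1)/2 * t ^ 2) / t ^ 3) (𝓝[>] (0:ℝ))
      (𝓝 (-(q * (q - 1) * (q - 2)) / 6)) := by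
  have hT : Tendsto (fun t : ℝ => t) (𝓝[>] (0:ℝ)) (𝓝 0) := tendsto_id.mono_left nhdsWithin_le_nhds
  apply HasDerivAt.lhopital_zero_nhdsGT
    (f' := fun t : ℝ => -(q * (1 - t) ^ (q - 1)) + q - q * (q-1) * t) (g' := fun t : ℝ => 3 * t ^ 2)
  · filter_upwards [Ioo_mem_nhdsGT one_pos] with t ht
    have h1 : (1:ℝ) - t ≠ 0 := by have := ht.2; intro h; have h2 := ht.2; linarith
    have := (((hasDerivAt_one_sub_rpow q t h1).sub_const 1).add
      ((hasDerivAt_id t).const_mul q)).sub ((hasDerivAt_pow 2 t).const_mul (q * (q-1)/2))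
    refine this.congr_deriv ?_ <;> (push_cast; ring)
  · filter_upwards with t
    have := hasDerivAt_pow 3 t
    refine this.congr_deriv ?_ <;> (push_cast; ring)
  · filter_upwards [self_mem_nhdsWithin] with t ht
    have : (0:ℝ) < t := ht
    positivity
  · have h0 := (((tendsto_one_sub_rpow q).sub_const 1).add (hT.const_mul q)).sub
      ((hT.pow 2).const_mul (q * (q-1)/2))
    simpa using h0
  · simpa using hT.pow 3
  · have h1 := (tendstoD2 (q-1)).const_mul (-q/3)
    have h2 : -q/3 * ((q-1) * ((q-1) - 1) / 2) = -(q * (q - 1) * (q - 2)) / 6 := by ring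
    rw [h2] at h1
    refine h1.congr' ?_
    filter_upwards [self_mem_nhdsWithin] with t ht
    have ht' : (t:ℝ) ≠ 0 := ne_of_gt ht
    field_simp
    ring
noncomputable def Qfun (c k t w z : ℝ) : ℝ :=
  3/4 - k/2 + k^2/2 - c + c^2/4 + 2*w
  + t*(k/4 - c*k/2 + c^2*k/4 + z + w - 2*w*k - w*c)
  + t^2*(-(w*k) + w*c*k - w^2)
  + t^3*(w^2*k)

set_option maxHeartbeats 1000000 in
private lemma tlimit (rs kt ζ : ℝ) (hrs : 0 < rs) (hζ2 : ζ^2 = 1 + 3*kt^2) (hζpos : 0 < ζ) :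
    Tendsto (fun t : ℝ => 4*Real.pi*ζ^2*rs^2*(1-t)^(ζ+kt-1)/(1-(1-t)^ζ)^2
      - 4*Real.pi*(rs^2/t^2 - kt*rs^2/t)) (𝓝[>] (0:ℝ))
      (𝓝 (Real.pi*rs^2*kt*(kt-2))) := by
  have hζ0 : ζ ≠ 0 := ne_of_gt hζpos
  have hT : Tendsto (fun t : ℝ => t) (𝓝[>] (0:ℝ)) (𝓝 0) := tendsto_id.mono_left nhdsWithin_le_nhds
  have hW : Tendsto (fun t : ℝ => (((1-t)^ζ - 1 + ζ*t - ζ*(ζ-1)/2*t^2)/t^3)/ζ) (𝓝[>] (0:ℝ))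
      (𝓝 (-((ζ-1)*(ζ-2))/6)) := by
    have h := (tendstoD3 ζ).div_const ζ
    have he : -(ζ*(ζ-1)*(ζ-2))/6/ζ = -((ζ-1)*(ζ-2))/6 := by field_simp
    rwa [he] at h
  have hZ : Tendsto (fun t : ℝ =>
      ((1-t)^(ζ+kt-1) - 1 + (ζ+kt-1)*t - (ζ+kt-1)*((ζ+kt-1)-1)/2*t^2)/t^3) (𝓝[>] (0:ℝ))
      (𝓝 (-((ζ+kt-1)*((ζ+kt-1)-1)*((ζ+kt-1)-2))/6)) := tendstoD3 (ζ+kt-1)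
  have hcont : Continuous (fun x : ℝ×ℝ×ℝ => Qfun ζ kt x.1 x.2.1 x.2.2) := by
    unfold Qfun; fun_prop
  have hprod := hT.prodMk_nhds (hW.prodMk_nhds hZ)
  have hQ : Tendsto (fun t : ℝ => Qfun ζ kt t ((((1-t)^ζ - 1 + ζ*t - ζ*(ζ-1)/2*t^2)/t^3)/ζ)
      (((1-t)^(ζ+kt-1) - 1 + (ζ+kt-1)*t - (ζ+kt-1)*((ζ+kt-1)-1)/2*t^2)/t^3)) (𝓝[>] (0:ℝ))
      (𝓝 (Qfun ζ kt 0 (-((ζ-1)*(ζ-2))/6) (-((ζ+kt-1)*((ζ+kt-1)-1)*((ζ+kt-1)-2))/6))) :=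
    (hcont.tendsto _).comp hprod
  have hden : Tendsto (fun t : ℝ =>
      1 - (ζ-1)/2*t - ((((1-t)^ζ - 1 + ζ*t - ζ*(ζ-1)/2*t^2)/t^3)/ζ)*t^2) (𝓝[>] (0:ℝ))
      (𝓝 (1 - (ζ-1)/2*0 - (-((ζ-1)*(ζ-2))/6)*0^2)) :=
    (tendsto_const_nhds.sub (hT.const_mul ((ζ-1)/2))).sub (hW.mul (hT.pow 2))
  have hden1 : (1 - (ζ-1)/2*0 - (-((ζ-1)*(ζ-2))/6)*(0:ℝ)^2) = 1 := by norm_num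
  rw [hden1] at hden
  have hg := (hQ.div (hden.pow 2) (by norm_num)).const_mul (4*Real.pi*rs^2)
  have hval : 4*Real.pi*rs^2 *
      (Qfun ζ kt 0 (-((ζ-1)*(ζ-2))/6) (-((ζ+kt-1)*((ζ+kt-1)-1)*((ζ+kt-1)-2))/6) / 1^2)
      = Real.pi*rs^2*kt*(kt-2) := by
    simp only [Qfun]
    linear_combination (-(Real.pi*rs^2)/3) * hζ2
  rw [hval] at hg
  apply hg.congr'
  filter_upwards [Ioo_mem_nhdsGT one_pos] with t ht
  obtain ⟨ht0, ht1⟩ := ht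
  have htne : t ≠ 0 := ne_of_gt ht0
  have h1t : (0:ℝ) < 1 - t := by linarith
  have hlt : (1-t)^ζ < 1 := Real.rpow_lt_one (le_of_lt h1t) (by linarith) hζpos
  obtain ⟨w, hWt⟩ : ∃ x, (((1-t)^ζ - 1 + ζ*t - ζ*(ζ-1)/2*t^2)/t^3)/ζ = x := ⟨_, rfl⟩
  obtain ⟨z, hZt⟩ : ∃ x,
      ((1-t)^(ζ+kt-1) - 1 + (ζ+kt-1)*t - (ζ+kt-1)*((ζ+kt-1)-1)/2*t^2)/t^3 = x := ⟨_, rfl⟩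
  simp only [Pi.div_apply]
  rw [hWt, hZt]
  have hw : ζ * w * t^3 = (1-t)^ζ - 1 + ζ*t - ζ*(ζ-1)/2*t^2 := by
    rw [← hWt]; field_simp
  have hz : z * t^3 = (1-t)^(ζ+kt-1) - 1 + (ζ+kt-1)*t - (ζ+kt-1)*((ζ+kt-1)-1)/2*t^2 := by
    rw [← hZt]; field_simp
  have hu : 1 - (1-t)^ζ = ζ*t*(1 - (ζ-1)/2*t - w*t^2) := by linear_combination hw
  have hupos : 0 < 1 - (ζ-1)/2*t - w*t^2 := by
    have h2 : 0 < 1 - (1-t)^ζ := by linarith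
    rw [hu] at h2
    by_contra hle
    push_neg at hle
    nlinarith [mul_pos hζpos ht0]
  have hune : (1 - (ζ-1)/2*t - w*t^2) ≠ 0 := ne_of_gt hupos
  have hp : (1-t)^(ζ+kt-1) = 1 - (ζ+kt-1)*t + (ζ+kt-1)*((ζ+kt-1)-1)/2*t^2 + z*t^3 := by
    linear_combination -hz
  have hnum : Qfun ζ kt t w z * t^2 =
      (1 - (ζ+kt-1)*t + (ζ+kt-1)*((ζ+kt-1)-1)/2*t^2 + z*t^3)
        - (1 - kt*t)*(1 - (ζ-1)/2*t - w*t^2)^2 := by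
    simp only [Qfun]; ring
  rw [hp, hu, mul_pow, mul_pow]
  have e3 : Qfun ζ kt t w z / (1 - (ζ-1)/2*t - w*t^2)^2
      = (Qfun ζ kt t w z * t^2)/(t^2*(1 - (ζ-1)/2*t - w*t^2)^2) := by
    rw [div_eq_div_iff (pow_ne_zero 2 hune)
      (mul_ne_zero (pow_ne_zero 2 htne) (pow_ne_zero 2 hune))]
    ring
  rw [e3, hnum]
  obtain ⟨U, hU⟩ : ∃ x, (1 - (ζ-1)/2*t - w*t^2) = x := ⟨_, rfl⟩
  rw [hU]
  have hUne : U ≠ 0 := hU ▸ hune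
  field_simp

/-- Large-distance expansion of the surface area:
`lim_{ρ→+∞} [A(ρ) − 4π(ρ² − k̃ r_s ρ)] = π r_s² k̃ (k̃ − 2)`. -/
theorem surface_area_large_distance
    (rs kt : ℝ) (hrs : 0 < rs)
    (ζ : ℝ) (hζ : ζ = Real.sqrt (1 + 3 * kt ^ 2))
    (A : ℝ → ℝ)
    (hA : ∀ ρ : ℝ, 0 < ρ → ρ ≠ rs → A ρ =
      4 * Real.pi * ζ ^ 2 * rs ^ 2 * |1 - rs / ρ| ^ (ζ + kt - 1) /
        (1 - Real.sign (1 - rs / ρ) * |1 - rs / ρ| ^ ζ) ^ 2) :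
    Tendsto (fun ρ : ℝ => A ρ - 4 * Real.pi * (ρ ^ 2 - kt * rs * ρ)) atTop
      (𝓝 (Real.pi * rs ^ 2 * kt * (kt - 2))) := by
  have hζ2 : ζ^2 = 1 + 3*kt^2 := by
    rw [hζ, sq]
    exact Real.mul_self_sqrt (by positivity)
  have hζpos : 0 < ζ := by
    rw [hζ]
    exact Real.sqrt_pos.mpr (by positivity)
  have hmain := tlimit rs kt ζ hrs hζ2 hζpos
  have hcomp : Tendsto (fun ρ : ℝ => rs/ρ) atTop (𝓝[>] (0:ℝ)) := by
    rw [tendsto_nhdsWithin_iff]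
    constructor
    · exact tendsto_const_nhds.div_atTop tendsto_id
    · filter_upwards [eventually_gt_atTop 0] with ρ hρ
      exact div_pos hrs hρ
  have h2 := hmain.comp hcomp
  apply h2.congr'
  filter_upwards [eventually_gt_atTop rs] with ρ hρ
  have hρ0 : 0 < ρ := lt_trans hrs hρ
  have ht0 : 0 < rs/ρ := div_pos hrs hρ0
  have ht1 : rs/ρ < 1 := (div_lt_one hρ0).mpr hρ
  have hxpos : 0 < 1 - rs/ρ := by linarith
  simp only [Function.comp]
  rw [hA ρ hρ0 (ne_of_gt hρ), Real.sign_of_pos hxpos, abs_of_pos hxpos, one_mul]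
  have e1 : rs^2/(rs/ρ)^2 = ρ^2 := by
    rw [div_pow]
    field_simp
  have e2 : kt*rs^2/(rs/ρ) = kt*rs*ρ := by
    field_simp
  rw [e1, e2]
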